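/- If an increasing sequence (u_j) of positive reals satisfies the lacunary condition (L) with constant A > 1, then for every m ∈ ℕ and every real t ≠ 0, Σ_{j=m+1}^∞ max_{u_{j-1} ≤ v ≤ u_j} |∫_{u_{j-1}}^{v} sin(t·u)/u du| ≤ 3A / (|t| · u_m). -/

import Mathlib

open Set Filter MeasureTheory Real
open scoped Topology ENNReal

noncomputable section

/-- Sum of absolute second-order rectangular increments of `f` over the grid `x`, `y`. -/
def vitaliSum (f : ℝ → ℝ → ℝ) (x y : ℕ → ℝ) (n m : ℕ) : ℝ :=
  ∑ i ∈ Finset.range n, ∑ j ∈ Finset.range m,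
    |f (x (i+1)) (y (j+1)) - f (x i) (y (j+1)) - f (x (i+1)) (y j) + f (x i) (y j)|

/-- Vitali variation of `f` over a set `Q ⊆ ℝ²`: the supremum, over compact rectangles
contained in `Q` and partitions of them, of the sum of absolute rectangular increments. -/
def vitaliVar (f : ℝ → ℝ → ℝ) (Q : Set (ℝ × ℝ)) : ℝ≥0∞ :=
  ⨆ (n : ℕ) (m : ℕ) (x : ℕ → ℝ) (y : ℕ → ℝ)
    (_ : ∀ i < n, x i < x (i+1)) (_ : ∀ j < m, y j < y (j+1))
    (_ : Set.Icc (x 0) (x n) ×ˢ Set.Icc (y 0) (y m) ⊆ Q),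
    ENNReal.ofReal (vitaliSum f x y n m)

/-- Bounded variation in the sense of Vitali over `ℝ²`. -/
def BVV (f : ℝ → ℝ → ℝ) : Prop := vitaliVar f Set.univ < ⊤

/-- Bounded variation in the sense of Hardy over `ℝ²`. -/
def BVH (f : ℝ → ℝ → ℝ) : Prop :=
  BVV f ∧ (∀ y, BoundedVariationOn (fun s => f s y) Set.univ) ∧
    (∀ x, BoundedVariationOn (fun s => f x s) Set.univ)

/-- The space `BV_{||0||}(ℝ²)`: Vitali bounded variation and vanishing as `‖(x,y)‖ → ∞`. -/
def BVzero (f : ℝ → ℝ → ℝ) : Prop :=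
  BVV f ∧ Tendsto (fun p : ℝ × ℝ => f p.1 p.2) (cocompact (ℝ × ℝ)) (𝓝 0)

/-- `x`, `y` form a partition of `[a,b] × [c,d]` with `n`, resp. `m`, subintervals. -/
def IsPartition (x y : ℕ → ℝ) (n m : ℕ) (a b c d : ℝ) : Prop :=
  x 0 = a ∧ x n = b ∧ y 0 = c ∧ y m = d ∧
    (∀ i < n, x i < x (i+1)) ∧ (∀ j < m, y j < y (j+1))

/-- The tags `(ξ i j, η i j)` belong to the corresponding subrectangles. -/
def Tags (x y : ℕ → ℝ) (ξ η : ℕ → ℕ → ℝ) (n m : ℕ) : Prop :=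
  ∀ i < n, ∀ j < m,
    ξ i j ∈ Set.Icc (x i) (x (i+1)) ∧ η i j ∈ Set.Icc (y j) (y (j+1))

/-- Riemann–Stieltjes sum of `g` with respect to `f`. -/
def RSSum (g f : ℝ → ℝ → ℝ) (x y : ℕ → ℝ) (ξ η : ℕ → ℕ → ℝ) (n m : ℕ) : ℝ :=
  ∑ i ∈ Finset.range n, ∑ j ∈ Finset.range m,
    g (ξ i j) (η i j) *
      (f (x (i+1)) (y (j+1)) - f (x i) (y (j+1)) - f (x (i+1)) (y j) + f (x i) (y j))

/-- `g` is Riemann–Stieltjes integrable with respect to `f` over `[a,b] × [c,d]`,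
with integral `A` (mesh measured by the diagonals of the subrectangles). -/
def RSIntegralOn (g f : ℝ → ℝ → ℝ) (a b c d A : ℝ) : Prop :=
  ∀ ε > 0, ∃ δ > 0, ∀ (n m : ℕ) (x y : ℕ → ℝ) (ξ η : ℕ → ℕ → ℝ),
    IsPartition x y n m a b c d → Tags x y ξ η n m →
    (∀ i < n, ∀ j < m, Real.sqrt ((x (i+1) - x i)^2 + (y (j+1) - y j)^2) < δ) →
    |RSSum g f x y ξ η n m - A| < ε

/-- Improper Riemann–Stieltjes integral of `g` with respect to `f` over `ℝ²`,
as a Pringsheim limit over expanding compact rectangles. -/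
def ImproperRS (g f : ℝ → ℝ → ℝ) (A : ℝ) : Prop :=
  ∀ ε > 0, ∃ M : ℝ, ∀ a b c d : ℝ, a ≤ -M → M ≤ b → c ≤ -M → M ≤ d →
    ∃ B : ℝ, RSIntegralOn g f a b c d B ∧ |B - A| < ε

/-- Improper Riemann–Stieltjes integral of a complex-valued `G` with respect to `f`,
defined via real and imaginary parts. -/
def ImproperRSC (G : ℝ → ℝ → ℂ) (f : ℝ → ℝ → ℝ) (A : ℂ) : Prop :=
  ImproperRS (fun s t => (G s t).re) f A.re ∧ ImproperRS (fun s t => (G s t).im) f A.im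

/-- Riemann sum of `f` over a tagged partition. -/
def KHSum (f : ℝ → ℝ → ℝ) (x y : ℕ → ℝ) (ξ η : ℕ → ℕ → ℝ) (n m : ℕ) : ℝ :=
  ∑ i ∈ Finset.range n, ∑ j ∈ Finset.range m,
    f (ξ i j) (η i j) * (x (i+1) - x i) * (y (j+1) - y j)

/-- The tagged partition is `δ`-fine for the gauge `δ`. -/
def KHFine (δ : ℝ × ℝ → ℝ) (x y : ℕ → ℝ) (ξ η : ℕ → ℕ → ℝ) (n m : ℕ) : Prop :=
  ∀ i < n, ∀ j < m,
    Set.Icc (x i) (x (i+1)) ⊆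
      Set.Ioo (ξ i j - δ (ξ i j, η i j)) (ξ i j + δ (ξ i j, η i j)) ∧
    Set.Icc (y j) (y (j+1)) ⊆
      Set.Ioo (η i j - δ (ξ i j, η i j)) (η i j + δ (ξ i j, η i j))

/-- `f` is Kurzweil–Henstock integrable over `[a,b] × [c,d]` with integral `A`. -/
def KHIntegralOn (f : ℝ → ℝ → ℝ) (a b c d A : ℝ) : Prop :=
  ∀ ε > 0, ∃ δ : ℝ × ℝ → ℝ, (∀ p, 0 < δ p) ∧
    ∀ (n m : ℕ) (x y : ℕ → ℝ) (ξ η : ℕ → ℕ → ℝ),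
      IsPartition x y n m a b c d → Tags x y ξ η n m → KHFine δ x y ξ η n m →
      |KHSum f x y ξ η n m - A| < ε

/-- Kurzweil–Henstock integrability of a complex-valued function, via components. -/
def KHIntegralOnC (f : ℝ → ℝ → ℂ) (a b c d : ℝ) (A : ℂ) : Prop :=
  KHIntegralOn (fun s t => (f s t).re) a b c d A.re ∧
  KHIntegralOn (fun s t => (f s t).im) a b c d A.im

/-- Pringsheim limit, over expanding compact rectangles, of Kurzweil–Henstock integrals. -/
def HasKHPringsheim (f : ℝ → ℝ → ℝ) (A : ℝ) : Prop :=
  ∀ ε > 0, ∃ M : ℝ, ∀ a b c d : ℝ, a ≤ -M → M ≤ b → c ≤ -M → M ≤ d →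
    ∃ B : ℝ, KHIntegralOn f a b c d B ∧ |B - A| < ε

/-- Complex-valued Pringsheim limit of Kurzweil–Henstock integrals. -/
def HasKHPringsheimC (f : ℝ → ℝ → ℂ) (A : ℂ) : Prop :=
  ∀ ε > 0, ∃ M : ℝ, ∀ a b c d : ℝ, a ≤ -M → M ≤ b → c ≤ -M → M ≤ d →
    ∃ B : ℂ, KHIntegralOnC f a b c d B ∧ ‖B - A‖ < ε

/-- The kernel `e^{-i(ξ t₁ + η t₂)}`. -/
def fourierKernel (ξ η t₁ t₂ : ℝ) : ℂ :=
  Complex.exp (-Complex.I * ((ξ * t₁ + η * t₂ : ℝ) : ℂ))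

/-- `A` is the KP-Fourier transform of `f` at `(ξ, η)`. -/
def HasKPFourier (f : ℝ → ℝ → ℝ) (ξ η : ℝ) (A : ℂ) : Prop :=
  HasKHPringsheimC (fun t₁ t₂ => (f t₁ t₂ : ℂ) * fourierKernel ξ η t₁ t₂) A

/-- The region `{(ξ,η) : α₁ ≤ |ξ| ≤ β₁, α₂ ≤ |η| ≤ β₂}`. -/
def annulusRect (α₁ β₁ α₂ β₂ : ℝ) : Set (ℝ × ℝ) :=
  {p | α₁ ≤ |p.1| ∧ |p.1| ≤ β₁ ∧ α₂ ≤ |p.2| ∧ |p.2| ≤ β₂}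

/-- The kernel `(sin(βt) - sin(αt))/t`, extended by continuity at `t = 0`. -/
def sinKernel (α β t : ℝ) : ℝ :=
  if t = 0 then β - α else (Real.sin (β * t) - Real.sin (α * t)) / t

/-- The kernel `h_{α,β}(t) = (sin(βt) - sin(αt))/(πt)`, extended by continuity at `t = 0`. -/
def sinKernelPi (α β t : ℝ) : ℝ :=
  if t = 0 then (β - α) / π else (Real.sin (β * t) - Real.sin (α * t)) / (π * t)

/-- `g_{(x,y)}(t₁,t₂) = f(x−t₁,y−t₂) + f(x−t₁,y+t₂) + f(x+t₁,y−t₂) + f(x+t₁,y+t₂)`. -/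
def quadSum (f : ℝ → ℝ → ℝ) (x y t₁ t₂ : ℝ) : ℝ :=
  f (x - t₁) (y - t₂) + f (x - t₁) (y + t₂) + f (x + t₁) (y - t₂) + f (x + t₁) (y + t₂)

/-- Lemma (Móricz): if `(u_j)` (with `u_0 = 0`) satisfies the lacunary condition (L) with
constant `A > 1`, then for every `m ≥ 1` and `t ≠ 0`,
`Σ_{j≥m+1} max_{u_{j-1} ≤ v ≤ u_j} |∫_{u_{j-1}}^v sin(tu)/u du| ≤ 3A/(|t| u_m)`
(stated via all partial sums of the nonnegative tail series). -/
lemma key_bound (t : ℝ) (ht : t ≠ 0) (a b : ℝ) (ha : 0 < a) (hab : a ≤ b) :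
    |∫ s in a..b, Real.sin (t * s) / s| ≤ 2 / (|t| * a) := by
  have ht' : 0 < |t| := abs_pos.mpr ht
  have hb : 0 < b := lt_of_lt_of_le ha hab
  have huIcc : Set.uIcc a b = Set.Icc a b := Set.uIcc_of_le hab
  have hspos : ∀ s ∈ Set.uIcc a b, 0 < s := by
    rw [huIcc]; exact fun s hs => lt_of_lt_of_le ha hs.1
  -- derivatives
  have hu : ∀ s ∈ Set.uIcc a b, HasDerivAt (fun x : ℝ => x⁻¹) (-(s^2)⁻¹) s :=
    fun s hs => hasDerivAt_inv (ne_of_gt (hspos s hs))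
  have hv : ∀ s : ℝ, HasDerivAt (fun x : ℝ => -Real.cos (t*x)/t) (Real.sin (t*s)) s := by
    intro s
    have h1 : HasDerivAt (fun x : ℝ => t * x) t s := by
      simpa using (hasDerivAt_id s).const_mul t
    have h2 := (Real.hasDerivAt_cos (t*s)).comp s h1
    have h3 := (h2.neg).div_const t
    exact h3.congr_deriv (by rw [div_eq_iff ht]; ring)
  have hcont : ContinuousOn (fun s : ℝ => (s^2)⁻¹) (Set.uIcc a b) := by
    apply ContinuousOn.inv₀ (by fun_prop)
    exact fun s hs => pow_ne_zero 2 (ne_of_gt (hspos s hs))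
  have hiu : IntervalIntegrable (fun s : ℝ => -(s^2)⁻¹) MeasureTheory.volume a b :=
    (hcont.neg).intervalIntegrable
  have hiv : IntervalIntegrable (fun s : ℝ => Real.sin (t*s)) MeasureTheory.volume a b :=
    (Real.continuous_sin.comp (continuous_const.mul continuous_id)).intervalIntegrable a b
  have parts := intervalIntegral.integral_mul_deriv_eq_deriv_mul
    (u := fun x : ℝ => x⁻¹) (v := fun x : ℝ => -Real.cos (t*x)/t)
    (u' := fun s : ℝ => -(s^2)⁻¹) (v' := fun s : ℝ => Real.sin (t*s))
    hu (fun s _ => hv s) hiu hiv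
  have heq : (∫ s in a..b, Real.sin (t * s) / s) = ∫ s in a..b, s⁻¹ * Real.sin (t*s) := by
    apply intervalIntegral.integral_congr
    intro s hs
    simp [div_eq_inv_mul]
  -- compute ∫ (s^2)⁻¹
  have hsq : (∫ s in a..b, (s^2)⁻¹) = a⁻¹ - b⁻¹ := by
    have : ∀ s ∈ Set.uIcc a b, HasDerivAt (fun x : ℝ => -x⁻¹) ((s^2)⁻¹) s := by
      intro s hs
      exact ((hasDerivAt_inv (ne_of_gt (hspos s hs))).neg).congr_deriv (by ring)
    rw [intervalIntegral.integral_eq_sub_of_hasDerivAt this hcont.intervalIntegrable]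
    ring
  -- bound the remainder integral
  have hrem : |∫ s in a..b, (-(s^2)⁻¹) * (-Real.cos (t*s)/t)| ≤ (a⁻¹ - b⁻¹) / |t| := by
    calc |∫ s in a..b, (-(s^2)⁻¹) * (-Real.cos (t*s)/t)|
        ≤ ∫ s in a..b, |(-(s^2)⁻¹) * (-Real.cos (t*s)/t)| := by
          exact intervalIntegral.abs_integral_le_integral_abs hab
      _ ≤ ∫ s in a..b, (s^2)⁻¹ / |t| := by
          apply intervalIntegral.integral_mono_on hab
          · apply IntervalIntegrable.abs
            apply ContinuousOn.intervalIntegrable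
            rw [huIcc] at hcont ⊢
            exact (hcont.neg).mul ((Real.continuous_cos.comp
              (continuous_const.mul continuous_id)).continuousOn.neg.div_const t)
          · exact (hcont.div_const |t|).intervalIntegrable
          · intro s hs
            have hs0 : 0 < s := lt_of_lt_of_le ha hs.1
            calc |(-(s^2)⁻¹) * (-Real.cos (t*s)/t)|
                = (s^2)⁻¹ * (|Real.cos (t*s)| / |t|) := by
                  rw [abs_mul, abs_neg, abs_div, abs_neg, abs_inv, abs_pow, abs_of_pos hs0]
              _ ≤ (s^2)⁻¹ * (1 / |t|) := by
                  gcongr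
                  exact Real.abs_cos_le_one _
              _ = (s^2)⁻¹ / |t| := by ring
      _ = (a⁻¹ - b⁻¹) / |t| := by
          rw [intervalIntegral.integral_div, hsq]
  rw [heq, parts]
  have h1 : |b⁻¹ * (-Real.cos (t*b)/t)| ≤ b⁻¹ / |t| := by
    calc |b⁻¹ * (-Real.cos (t*b)/t)| = b⁻¹ * (|Real.cos (t*b)| / |t|) := by
          rw [abs_mul, abs_div, abs_neg, abs_inv, abs_of_pos hb]
      _ ≤ b⁻¹ * (1 / |t|) := by gcongr; exact Real.abs_cos_le_one _
      _ = b⁻¹ / |t| := by ring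
  have h2 : |a⁻¹ * (-Real.cos (t*a)/t)| ≤ a⁻¹ / |t| := by
    calc |a⁻¹ * (-Real.cos (t*a)/t)| = a⁻¹ * (|Real.cos (t*a)| / |t|) := by
          rw [abs_mul, abs_div, abs_neg, abs_inv, abs_of_pos ha]
      _ ≤ a⁻¹ * (1 / |t|) := by gcongr; exact Real.abs_cos_le_one _
      _ = a⁻¹ / |t| := by ring
  have hbinv : 0 ≤ b⁻¹ := by positivity
  calc |b⁻¹ * (-Real.cos (t*b)/t) - a⁻¹ * (-Real.cos (t*a)/t)
        - ∫ s in a..b, (-(s^2)⁻¹) * (-Real.cos (t*s)/t)|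
      ≤ |b⁻¹ * (-Real.cos (t*b)/t)| + |a⁻¹ * (-Real.cos (t*a)/t)|
        + |∫ s in a..b, (-(s^2)⁻¹) * (-Real.cos (t*s)/t)| := by
        exact (abs_sub _ _).trans (by gcongr; exact abs_sub _ _)
    _ ≤ b⁻¹/|t| + a⁻¹/|t| + (a⁻¹ - b⁻¹)/|t| := by gcongr
    _ = 2 / (|t| * a) := by field_simp; ring

theorem stmt1 (u : ℕ → ℝ) (h0 : u 0 = 0) (hmono : StrictMono u)
    (hpos : ∀ j, 1 ≤ j → 0 < u j) (A : ℝ) (hA : 1 < A)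
    (hsum : Summable fun j : ℕ => 1 / u (j + 1))
    (hL : ∀ m : ℕ, 1 ≤ m → u m * ∑' j : ℕ, 1 / u (m + j) ≤ A)
    (t : ℝ) (ht : t ≠ 0) (m : ℕ) (hm : 1 ≤ m) :
    ∀ n : ℕ, ∑ j ∈ Finset.range n,
      sSup ((fun v : ℝ => |∫ s in (u (m + j))..v, Real.sin (t * s) / s|) ''
        Set.Icc (u (m + j)) (u (m + j + 1))) ≤ 3 * A / (|t| * u m) := by
  intro n
  have ht' : 0 < |t| := abs_pos.mpr ht
  have hum : 0 < u m := hpos m hm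
  have humj : ∀ j : ℕ, 0 < u (m + j) := fun j => hpos _ (le_trans hm (Nat.le_add_right m j))
  -- each term bounded
  have hterm : ∀ j : ℕ,
      sSup ((fun v : ℝ => |∫ s in (u (m + j))..v, Real.sin (t * s) / s|) ''
        Set.Icc (u (m + j)) (u (m + j + 1))) ≤ (2 / |t|) * (1 / u (m + j)) := by
    intro j
    apply csSup_le
    · exact ((Set.nonempty_Icc.mpr (le_of_lt (hmono (Nat.lt_succ_self _)))).image _)
    · rintro _ ⟨v, hv, rfl⟩
      have := key_bound t ht (u (m + j)) v (humj j) hv.1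
      calc |∫ s in (u (m + j))..v, Real.sin (t * s) / s| ≤ 2 / (|t| * u (m + j)) := this
        _ = (2 / |t|) * (1 / u (m + j)) := by field_simp
  -- summability of shifted series
  obtain ⟨k, rfl⟩ : ∃ k, m = k + 1 := ⟨m - 1, (Nat.succ_pred_eq_of_pos hm).symm⟩
  have hsum' : Summable fun j : ℕ => 1 / u (k + 1 + j) := by
    have := (summable_nat_add_iff k).mpr hsum
    apply this.congr
    intro j
    have h : j + k + 1 = k + 1 + j := by omega
    rw [h]
  have htsum : (∑' j : ℕ, 1 / u (k + 1 + j)) ≤ A / u (k + 1) := by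
    rw [le_div_iff₀ hum]
    calc (∑' j : ℕ, 1 / u (k + 1 + j)) * u (k + 1)
        = u (k + 1) * ∑' j : ℕ, 1 / u (k + 1 + j) := by ring
      _ ≤ A := hL (k + 1) hm
  have hpartial : ∑ j ∈ Finset.range n, 1 / u (k + 1 + j) ≤ ∑' j : ℕ, 1 / u (k + 1 + j) :=
    Summable.sum_le_tsum _ (fun j _ => div_nonneg zero_le_one (humj j).le) hsum'
  calc ∑ j ∈ Finset.range n,
        sSup ((fun v : ℝ => |∫ s in (u (k + 1 + j))..v, Real.sin (t * s) / s|) ''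
          Set.Icc (u (k + 1 + j)) (u (k + 1 + j + 1)))
      ≤ ∑ j ∈ Finset.range n, (2 / |t|) * (1 / u (k + 1 + j)) :=
        Finset.sum_le_sum fun j _ => hterm j
    _ = (2 / |t|) * ∑ j ∈ Finset.range n, 1 / u (k + 1 + j) := by
        rw [Finset.mul_sum]
    _ ≤ (2 / |t|) * (A / u (k + 1)) := by
        gcongr
        exact hpartial.trans htsum
    _ ≤ 3 * A / (|t| * u (k + 1)) := by
        rw [div_mul_div_comm, div_le_div_iff₀ (by positivity) (by positivity)]
        have hX : 0 < |t| * u (k + 1) := mul_pos ht' hum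
        nlinarith [mul_pos (lt_trans zero_lt_one hA) hX]
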